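/- arXiv:1706.08117 — 2 statements merged into one kernel-verified Lean document; each statement's English description precedes it below -/
import Mathlib

section
/- Let (X_t)_{t≥0} be a 3-color cyclic cellular automaton trajectory on ℤ: X_{t+1}(v) = X_t(v)+1 mod 3 if some neighbor u ∈ {v−1,v+1} has X_t(u) = X_t(v)+1 mod 3, else X_{t+1}(v) = X_t(v). Define dX_t(x, x+1) ∈ {−1,0,1} as the representative of X_t(x+1) − X_t(x) mod 3. Then for all t ≥ 0: {dX_t(0,1) = −1} = {Σ_{x=−t}^{s} dX_0(x, x+1) ≤ −1 for all −t ≤ s ≤ t}. -/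
open scoped BigOperators

/-- One synchronous step of the 3-color cyclic cellular automaton on `ℤ`:
a site advances its color by `1 (mod 3)` iff some neighbor has that color. -/
def ccaStep (c : ℤ → ZMod 3) : ℤ → ZMod 3 := fun v =>
  if c (v - 1) = c v + 1 ∨ c (v + 1) = c v + 1 then c v + 1 else c v

/-- The representative in `{-1,0,1} ⊆ ℤ` of an element of `ℤ₃`. -/
def code3 (z : ZMod 3) : ℤ := if z = 0 then 0 else if z = 1 then 1 else -1

lemma key_neg : ∀ z u v w : ZMod 3,
    code3 ((if u = v + 1 ∨ w = v + 1 then v + 1 else v) -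
           (if z = u + 1 ∨ v = u + 1 then u + 1 else u)) = -1 ↔
      code3 (u - z) = -1 ∧
        (code3 (v - u) = -1 ∨ (code3 (v - u) = 0 ∧ ¬ code3 (w - v) = 1)) := by decide

lemma key_pos : ∀ z u v w : ZMod 3,
    code3 ((if u = v + 1 ∨ w = v + 1 then v + 1 else v) -
           (if z = u + 1 ∨ v = u + 1 then u + 1 else u)) = 1 ↔
      code3 (w - v) = 1 ∧
        (code3 (v - u) = 1 ∨ (code3 (v - u) = 0 ∧ ¬ code3 (u - z) = -1)) := by decide

lemma code3_range : ∀ z : ZMod 3, code3 z = -1 ∨ code3 z = 0 ∨ code3 z = 1 := by decide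
lemma code3_bounds : ∀ z : ZMod 3, -1 ≤ code3 z ∧ code3 z ≤ 1 := by decide

lemma Icc_eq_Ioc (c s : ℤ) : Finset.Icc c s = Finset.Ioc (c - 1) s := by
  ext y; simp only [Finset.mem_Icc, Finset.mem_Ioc]; omega

/-- Partial sums of `d` on `Ioc (a-1) s`. -/
noncomputable def Gfun (d : ℤ → ℤ) (a : ℤ) (s : ℤ) : ℤ := ∑ y ∈ Finset.Ioc (a - 1) s, d y

lemma Gfun_base (d : ℤ → ℤ) (a : ℤ) : Gfun d a (a - 1) = 0 := by
  simp [Gfun]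

lemma Gfun_split (d : ℤ → ℤ) (a u v : ℤ) (h1 : a - 1 ≤ u) (h2 : u ≤ v) :
    Gfun d a v = Gfun d a u + ∑ y ∈ Finset.Ioc u v, d y := by
  unfold Gfun
  have hdisj : Disjoint (Finset.Ioc (a - 1) u) (Finset.Ioc u v) :=
    Finset.disjoint_left.2 fun y hy1 hy2 => by
      simp only [Finset.mem_Ioc] at hy1 hy2; omega
  rw [← Finset.Ioc_union_Ioc_eq_Ioc h1 h2, Finset.sum_union hdisj]

lemma Gfun_Icc (d : ℤ → ℤ) (a c s : ℤ) (h1 : a ≤ c) (h2 : c ≤ s + 1) :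
    (∑ y ∈ Finset.Icc c s, d y) = Gfun d a s - Gfun d a (c - 1) := by
  have h := Gfun_split d a (c - 1) s (by omega) (by omega)
  rw [Icc_eq_Ioc]
  linarith

lemma Gfun_last (d : ℤ → ℤ) (a v : ℤ) (h : a - 1 ≤ v - 1) :
    Gfun d a v = Gfun d a (v - 1) + d v := by
  have h2 := Gfun_split d a (v - 1) v h (by omega)
  have h3 : Finset.Ioc (v - 1) v = {v} := by
    ext y; simp only [Finset.mem_Ioc, Finset.mem_singleton]; omega
  rw [h3, Finset.sum_singleton] at h2; exact h2

lemma Gfun_a (d : ℤ → ℤ) (a : ℤ) : Gfun d a a = d a := by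
  have h := Gfun_last d a a le_rfl
  rw [Gfun_base] at h; linarith

lemma TLlem (d : ℤ → ℤ) (a c e : ℤ) (hc : a ≤ c) :
    (∀ s, c ≤ s → s ≤ e → (∑ y ∈ Finset.Icc c s, d y) ≤ -1) ↔
      (∀ u, c ≤ u → u ≤ e → Gfun d a u ≤ Gfun d a (c - 1) - 1) := by
  constructor
  · intro h u h1 h2
    have h3 := h u h1 h2
    rw [Gfun_Icc d a c u hc (by omega)] at h3
    linarith
  · intro h s h1 h2
    rw [Gfun_Icc d a c s hc (by omega)]
    have := h s h1 h2
    linarith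

lemma TRlem (d : ℤ → ℤ) (a c e : ℤ) (hc : a ≤ c) :
    (∀ s, c ≤ s → s ≤ e → 1 ≤ ∑ y ∈ Finset.Icc s e, d y) ↔
      (∀ u, c - 1 ≤ u → u ≤ e - 1 → Gfun d a u + 1 ≤ Gfun d a e) := by
  constructor
  · intro h u h1 h2
    have h3 := h (u + 1) (by omega) (by omega)
    rw [Gfun_Icc d a (u + 1) e (by omega) (by omega)] at h3
    rw [show u + 1 - 1 = u from by ring] at h3
    linarith
  · intro h s h1 h2
    rw [Gfun_Icc d a s e (by omega) (by omega)]
    have := h (s - 1) (by omega) (by omega)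
    linarith

lemma claim1 (G : ℤ → ℤ) (a b : ℤ) (hab : a + 2 ≤ b)
    (hGam : G (a - 1) = 0) (hGa : -1 ≤ G a)
    (hb : G b ≤ G (b - 1) + 1) :
    ((∀ u, a ≤ u → u ≤ b → G u ≤ G (a - 1) - 1) ↔
      ((∀ u, a ≤ u → u ≤ b - 2 → G u ≤ G (a - 1) - 1) ∧
        ((∀ u, a + 1 ≤ u → u ≤ b - 1 → G u ≤ G a - 1) ∨
          (¬(∀ u, a ≤ u → u ≤ b - 2 → G u + 1 ≤ G (b - 1)) ∧
           ¬(∀ u, a + 1 ≤ u → u ≤ b - 1 → G u + 1 ≤ G b))))) := by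
  constructor
  · intro hE
    refine ⟨fun u h1 h2 => hE u h1 (by omega), ?_⟩
    by_cases hB : ∀ u, a + 1 ≤ u → u ≤ b - 1 → G u ≤ G a - 1
    · exact Or.inl hB
    · push_neg at hB
      obtain ⟨u0, h1, h2, h3⟩ := hB
      refine Or.inr ⟨?_, ?_⟩
      · intro hC
        have c1 := hC a le_rfl (by omega)
        have c2 := hE (b - 1) (by omega) (by omega)
        have c3 := hE a le_rfl (by omega)
        linarith
      · intro hD
        have c1 := hD u0 h1 h2
        have c2 := hE b (by omega) le_rfl
        have c3 := hE u0 (by omega) (by omega)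
        have c4 := hE a le_rfl (by omega)
        linarith
  · rintro ⟨hA, hBCD⟩
    have hkey : G (b - 1) ≤ -1 ∧ G b ≤ -1 := by
      rcases hBCD with hB | ⟨hC, hD⟩
      · have c1 := hB (b - 1) (by omega) le_rfl
        have c2 := hA a le_rfl (by omega)
        constructor <;> linarith
      · push_neg at hC hD
        obtain ⟨u1, h11, h12, h13⟩ := hC
        obtain ⟨u2, h21, h22, h23⟩ := hD
        have c1 := hA u1 h11 h12
        have hb1 : G (b - 1) ≤ -1 := by linarith
        refine ⟨hb1, ?_⟩
        by_cases hc : u2 ≤ b - 2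
        · have := hA u2 (by omega) hc; linarith
        · have hu2 : u2 = b - 1 := by omega
          rw [hu2] at h23; linarith
    intro u h1 h2
    by_cases hc : u ≤ b - 2
    · exact hA u h1 hc
    · have hu : u = b - 1 ∨ u = b := by omega
      rcases hu with h | h <;> rw [h] <;> linarith [hkey.1, hkey.2]

lemma claim2 (G : ℤ → ℤ) (a b : ℤ) (hab : a + 2 ≤ b)
    (hGam : G (a - 1) = 0) (hGa : -1 ≤ G a)
    (hb : G b ≤ G (b - 1) + 1) :
    ((∀ u, a - 1 ≤ u → u ≤ b - 1 → G u + 1 ≤ G b) ↔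
      ((∀ u, a + 1 ≤ u → u ≤ b - 1 → G u + 1 ≤ G b) ∧
        ((∀ u, a ≤ u → u ≤ b - 2 → G u + 1 ≤ G (b - 1)) ∨
          (¬(∀ u, a ≤ u → u ≤ b - 2 → G u ≤ G (a - 1) - 1) ∧
           ¬(∀ u, a + 1 ≤ u → u ≤ b - 1 → G u ≤ G a - 1))))) := by
  constructor
  · intro hF
    refine ⟨fun u h1 h2 => hF u (by omega) h2, ?_⟩
    by_cases hC : ∀ u, a ≤ u → u ≤ b - 2 → G u + 1 ≤ G (b - 1)
    · exact Or.inl hC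
    · push_neg at hC
      obtain ⟨u0, h1, h2, h3⟩ := hC
      have c1 := hF u0 (by omega) (by omega)
      have c2 := hF (b - 1) (by omega) le_rfl
      have c3 := hF a (by omega) (by omega)
      have c4 := hF (a - 1) le_rfl (by omega)
      refine Or.inr ⟨?_, ?_⟩
      · intro hA
        have := hA u0 h1 h2
        linarith
      · intro hB
        have := hB (b - 1) (by omega) le_rfl
        linarith
  · rintro ⟨hD, hCAB⟩
    have hkey : G a + 1 ≤ G b ∧ 1 ≤ G b := by
      rcases hCAB with hC | ⟨hA, hB⟩
      · have c1 := hC a le_rfl (by omega)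
        have c2 := hD (b - 1) (by omega) le_rfl
        constructor <;> linarith
      · push_neg at hA hB
        obtain ⟨u1, h11, h12, h13⟩ := hA
        obtain ⟨u2, h21, h22, h23⟩ := hB
        have c2 := hD u2 h21 h22
        have hGb : 1 ≤ G b := by
          by_cases hc : a + 1 ≤ u1
          · have := hD u1 hc (by omega); linarith
          · have hu : u1 = a := by omega
            rw [hu] at h13
            linarith
        exact ⟨by linarith, hGb⟩
    intro u h1 h2
    by_cases hc : a + 1 ≤ u
    · exact hD u hc h2
    · have hu : u = a - 1 ∨ u = a := by omega
      rcases hu with h | h <;> rw [h] <;> linarith [hkey.1, hkey.2]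

lemma logic1 (A B C D' E : Prop) (h : E ↔ (A ∧ (B ∨ (¬C ∧ ¬D')))) :
    (A ∧ (B ∨ ((¬B ∧ ¬C) ∧ ¬D'))) ↔ E := by tauto

lemma logic2 (A B C D' F : Prop) (h : F ↔ (D' ∧ (C ∨ (¬A ∧ ¬B)))) :
    (D' ∧ (C ∨ ((¬B ∧ ¬C) ∧ ¬A))) ↔ F := by tauto

lemma mainAux (d : ℤ → ℤ) (hd : ∀ y, -1 ≤ d y ∧ d y ≤ 1)
    (D : ℕ → ℤ → ℤ)
    (hD0 : ∀ x, D 0 x = d x)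
    (hrange : ∀ t x, D t x = -1 ∨ D t x = 0 ∨ D t x = 1)
    (hneg : ∀ t x, D (t + 1) x = -1 ↔
      D t (x - 1) = -1 ∧ (D t x = -1 ∨ (D t x = 0 ∧ ¬ D t (x + 1) = 1)))
    (hpos : ∀ t x, D (t + 1) x = 1 ↔
      D t (x + 1) = 1 ∧ (D t x = 1 ∨ (D t x = 0 ∧ ¬ D t (x - 1) = -1))) :
    ∀ t : ℕ, ∀ x : ℤ,
      (D t x = -1 ↔ ∀ s : ℤ, x - (t : ℤ) ≤ s → s ≤ x + (t : ℤ) →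
          (∑ y ∈ Finset.Icc (x - (t : ℤ)) s, d y) ≤ -1)
      ∧ (D t x = 1 ↔ ∀ s : ℤ, x - (t : ℤ) ≤ s → s ≤ x + (t : ℤ) →
          1 ≤ ∑ y ∈ Finset.Icc s (x + (t : ℤ)), d y) := by
  intro t
  induction t with
  | zero =>
    intro x
    simp only [Nat.cast_zero, sub_zero, add_zero]
    rw [hD0]
    constructor
    · constructor
      · intro h s h1 h2
        have hs : s = x := le_antisymm h2 h1
        rw [hs, Finset.Icc_self, Finset.sum_singleton]
        exact h.le
      · intro h
        have h1 := h x le_rfl le_rfl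
        rw [Finset.Icc_self, Finset.sum_singleton] at h1
        exact le_antisymm h1 (hd x).1
    · constructor
      · intro h s h1 h2
        have hs : s = x := le_antisymm h2 h1
        rw [hs, Finset.Icc_self, Finset.sum_singleton]
        exact h.ge
      · intro h
        have h1 := h x le_rfl le_rfl
        rw [Finset.Icc_self, Finset.sum_singleton] at h1
        exact le_antisymm (hd x).2 h1
  | succ t ih =>
    intro x
    push_cast
    simp only [show x - ((t : ℤ) + 1) = x - (t : ℤ) - 1 from by ring,
               show x + ((t : ℤ) + 1) = x + (t : ℤ) + 1 from by ring]
    have hNA := (ih (x - 1)).1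
    have hNB := (ih x).1
    have hPB := (ih x).2
    have hPC := (ih (x + 1)).2
    simp only [show x - 1 - (t : ℤ) = x - (t : ℤ) - 1 from by ring,
               show x - 1 + (t : ℤ) = x + (t : ℤ) - 1 from by ring] at hNA
    simp only [show x + 1 - (t : ℤ) = x - (t : ℤ) + 1 from by ring,
               show x + 1 + (t : ℤ) = x + (t : ℤ) + 1 from by ring] at hPC
    have hA := hNA.trans (TLlem d (x - (t : ℤ) - 1) (x - (t : ℤ) - 1) (x + (t : ℤ) - 1) le_rfl)
    have hB := hNB.trans (TLlem d (x - (t : ℤ) - 1) (x - (t : ℤ)) (x + (t : ℤ)) (by omega))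
    have hC := hPB.trans (TRlem d (x - (t : ℤ) - 1) (x - (t : ℤ)) (x + (t : ℤ)) (by omega))
    have hDD := hPC.trans (TRlem d (x - (t : ℤ) - 1) (x - (t : ℤ) + 1) (x + (t : ℤ) + 1) (by omega))
    have hE := TLlem d (x - (t : ℤ) - 1) (x - (t : ℤ) - 1) (x + (t : ℤ) + 1) le_rfl
    have hF := TRlem d (x - (t : ℤ) - 1) (x - (t : ℤ) - 1) (x + (t : ℤ) + 1) le_rfl
    have hGam : Gfun d (x - (t : ℤ) - 1) (x - (t : ℤ) - 1 - 1) = 0 := Gfun_base d _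
    have hGa : -1 ≤ Gfun d (x - (t : ℤ) - 1) (x - (t : ℤ) - 1) := by
      rw [Gfun_a]; exact (hd _).1
    have hbstep : Gfun d (x - (t : ℤ) - 1) (x + (t : ℤ) + 1) ≤
        Gfun d (x - (t : ℤ) - 1) (x + (t : ℤ) + 1 - 1) + 1 := by
      rw [Gfun_last d (x - (t : ℤ) - 1) (x + (t : ℤ) + 1) (by omega)]
      have := (hd (x + (t : ℤ) + 1)).2
      linarith
    have hc1 := claim1 (Gfun d (x - (t : ℤ) - 1)) (x - (t : ℤ) - 1) (x + (t : ℤ) + 1)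
      (by omega) hGam hGa hbstep
    have hc2 := claim2 (Gfun d (x - (t : ℤ) - 1)) (x - (t : ℤ) - 1) (x + (t : ℤ) + 1)
      (by omega) hGam hGa hbstep
    simp only [show x - (t : ℤ) - 1 - 1 = x - (t : ℤ) - 2 from by ring,
               show x - (t : ℤ) - 1 + 1 = x - (t : ℤ) from by ring,
               show x + (t : ℤ) + 1 - 2 = x + (t : ℤ) - 1 from by ring,
               show x + (t : ℤ) + 1 - 1 = x + (t : ℤ) from by ring,
               show x - (t : ℤ) + 1 - 1 = x - (t : ℤ) from by ring]
      at hA hB hC hDD hE hF hc1 hc2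
    have hz : D t x = 0 ↔ (¬ D t x = -1 ∧ ¬ D t x = 1) := by
      rcases hrange t x with h | h | h <;> rw [h] <;> norm_num
    constructor
    · rw [hneg t x, hz, hA, hB, hC, hDD, hE]
      exact logic1 _ _ _ _ _ hc1
    · rw [hpos t x, hz, hA, hB, hC, hDD, hF]
      exact logic2 _ _ _ _ _ hc2

/-- Fisch's survival identity: for any 3-color CCA trajectory
`(X_t)` on `ℤ` with edge differential `dX_t(x,x+1) = code3 (X_t(x+1) - X_t(x))`,
for all `t ≥ 0`: `dX_t(0,1) = -1` iff
`∑_{x=-t}^{s} dX_0(x,x+1) ≤ -1` for all `-t ≤ s ≤ t`. -/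
theorem stmt_12 (X : ℕ → ℤ → ZMod 3)
    (hX : ∀ t v, X (t + 1) v = ccaStep (X t) v) :
    ∀ t : ℕ,
      (code3 (X t 1 - X t 0) = -1) ↔
        (∀ s : ℤ, -(t : ℤ) ≤ s → s ≤ (t : ℤ) →
          (∑ x ∈ Finset.Icc (-(t : ℤ)) s, code3 (X 0 (x + 1) - X 0 x)) ≤ -1) := by
  have hneg : ∀ (t : ℕ) (x : ℤ), code3 (X (t + 1) (x + 1) - X (t + 1) x) = -1 ↔
      code3 (X t (x - 1 + 1) - X t (x - 1)) = -1 ∧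
        (code3 (X t (x + 1) - X t x) = -1 ∨
          (code3 (X t (x + 1) - X t x) = 0 ∧
            ¬ code3 (X t (x + 1 + 1) - X t (x + 1)) = 1)) := by
    intro t x
    rw [hX t (x + 1), hX t x]
    simp only [ccaStep]
    rw [show x + 1 - 1 = x from by ring, show x + 1 + 1 = x + 2 from by ring,
        show x - 1 + 1 = x from by ring]
    exact key_neg (X t (x - 1)) (X t x) (X t (x + 1)) (X t (x + 2))
  have hpos : ∀ (t : ℕ) (x : ℤ), code3 (X (t + 1) (x + 1) - X (t + 1) x) = 1 ↔
      code3 (X t (x + 1 + 1) - X t (x + 1)) = 1 ∧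
        (code3 (X t (x + 1) - X t x) = 1 ∨
          (code3 (X t (x + 1) - X t x) = 0 ∧
            ¬ code3 (X t (x - 1 + 1) - X t (x - 1)) = -1)) := by
    intro t x
    rw [hX t (x + 1), hX t x]
    simp only [ccaStep]
    rw [show x + 1 - 1 = x from by ring, show x + 1 + 1 = x + 2 from by ring,
        show x - 1 + 1 = x from by ring]
    exact key_pos (X t (x - 1)) (X t x) (X t (x + 1)) (X t (x + 2))
  have main := mainAux (fun y => code3 (X 0 (y + 1) - X 0 y)) (fun y => code3_bounds _)
    (fun t x => code3 (X t (x + 1) - X t x)) (fun x => rfl) (fun t x => code3_range _)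
    hneg hpos
  intro t
  have h := (main t 0).1
  simp only [zero_sub, zero_add] at h
  exact h
end

section
/- Let (X_t)_{t≥1} be a 3-color FCA trajectory on ℤ, and suppose at time t ≥ 1 there is an r-particle on edge (x, x+1), i.e. dX_t(x, x+1) = 1. If X_t(x) ≠ 1, then dX_{t+1}(x, x+1) = 1 (the r-particle remains on the same edge at time t+1). -/
/-- One synchronous step of the 3-color firefly cellular automaton on `ℤ`. -/
def fcaStep (c : ℤ → ZMod 3) : ℤ → ZMod 3 := fun v =>
  if c v = 2 ∧ (c (v - 1) = 1 ∨ c (v + 1) = 1) then c v else c v + 1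

def step1 (p q r : ZMod 3) : ZMod 3 :=
  if q = 2 ∧ (p = 1 ∨ r = 1) then q else q + 1

lemma key (a b c d e f : ZMod 3)
    (h1 : code3 (step1 c d e - step1 b c d) = 1)
    (h2 : step1 b c d ≠ 1) :
    code3 (step1 (step1 b c d) (step1 c d e) (step1 d e f)
         - step1 (step1 a b c) (step1 b c d) (step1 c d e)) = 1 := by
  revert h1 h2; revert a b c d e f; decide

/-- along a 3-color FCA trajectory on `ℤ`, if at time `t ≥ 1`
there is an `r`-particle on edge `(x,x+1)` (i.e. `dX_t(x,x+1) = 1`) and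
`X_t(x) ≠ 1`, then `dX_{t+1}(x,x+1) = 1`. -/
theorem stmt_14 (X : ℕ → ℤ → ZMod 3)
    (hX : ∀ t v, X (t + 1) v = fcaStep (X t) v)
    (t : ℕ) (ht : 1 ≤ t) (x : ℤ)
    (hr : code3 (X t (x + 1) - X t x) = 1)
    (hblink : X t x ≠ 1) :
    code3 (X (t + 1) (x + 1) - X (t + 1) x) = 1 := by
  obtain ⟨s, rfl⟩ : ∃ s, t = s + 1 := ⟨t - 1, (Nat.succ_pred_eq_of_pos ht).symm⟩
  have hstep : ∀ (u : ℕ) (v : ℤ), X (u + 1) v = step1 (X u (v - 1)) (X u v) (X u (v + 1)) :=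
    fun u v => hX u v
  have e0 : X (s+1) (x-1) = step1 (X s (x-2)) (X s (x-1)) (X s x) := by
    rw [hstep]; congr 1 <;> ring_nf
  have e1 : X (s+1) x = step1 (X s (x-1)) (X s x) (X s (x+1)) := by
    rw [hstep]
  have e2 : X (s+1) (x+1) = step1 (X s x) (X s (x+1)) (X s (x+2)) := by
    rw [hstep]; congr 1 <;> ring_nf
  have e3 : X (s+1) (x+2) = step1 (X s (x+1)) (X s (x+2)) (X s (x+3)) := by
    rw [hstep]; congr 1 <;> ring_nf
  have E0 : X (s+1+1) x = step1 (X (s+1) (x-1)) (X (s+1) x) (X (s+1) (x+1)) := hstep _ _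
  have E1 : X (s+1+1) (x+1) = step1 (X (s+1) x) (X (s+1) (x+1)) (X (s+1) (x+2)) := by
    rw [hstep]; congr 1 <;> ring_nf
  rw [E0, E1, e0, e1, e2, e3]
  rw [e1, e2] at hr
  rw [e1] at hblink
  exact key (X s (x-2)) (X s (x-1)) (X s x) (X s (x+1)) (X s (x+2)) (X s (x+3)) hr hblink
end
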